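/- Quadrangle inequality for two-line last passage: let f₁, f₂ : ℝ → ℝ be continuous, and for x ≤ y define L(x,y) := sup_{z ∈ [x,y]} [f₂(z) − f₂(x) + f₁(y) − f₁(z)] (last passage from (x,2) to (y,1)). Then for x ≤ x' and y ≤ y' with x' ≤ y, we have L(x, y') + L(x', y) ≤ L(x, y) + L(x', y'). -/

import Mathlib

/-- The two-line last passage value from `(x, 2)` to `(y, 1)`:
`L(x,y) = sup_{z ∈ [x,y]} [f₂(z) − f₂(x) + f₁(y) − f₁(z)]`. -/
noncomputable def twoLineLPP (f₁ f₂ : ℝ → ℝ) (x y : ℝ) : ℝ :=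
  sSup ((fun z => f₂ z - f₂ x + f₁ y - f₁ z) '' Set.Icc x y)

lemma sSup_image_add_const {s : Set ℝ} (hne : s.Nonempty) {h : ℝ → ℝ}
    (hb : BddAbove (h '' s)) (c : ℝ) :
    sSup ((fun z => h z + c) '' s) = sSup (h '' s) + c := by
  obtain ⟨M, hM⟩ := hb
  have hb' : BddAbove ((fun z => h z + c) '' s) := by
    refine ⟨M + c, ?_⟩
    rintro _ ⟨z, hz, rfl⟩
    exact add_le_add_left (hM ⟨z, hz, rfl⟩) c
  apply le_antisymm
  · refine csSup_le (hne.image _) ?_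
    rintro _ ⟨z, hz, rfl⟩
    exact add_le_add_left (le_csSup ⟨M, hM⟩ ⟨z, hz, rfl⟩) c
  · have h1 : sSup (h '' s) ≤ sSup ((fun z => h z + c) '' s) - c := by
      refine csSup_le (hne.image _) ?_
      rintro _ ⟨z, hz, rfl⟩
      have := le_csSup hb' (⟨z, hz, rfl⟩ : h z + c ∈ (fun z => h z + c) '' s)
      linarith
    linarith

/-- Quadrangle inequality for two-line last passage:
for `x ≤ x' ≤ y ≤ y'`, `L(x,y') + L(x',y) ≤ L(x,y) + L(x',y')`. -/
theorem twoLineLPP_quadrangle (f₁ f₂ : ℝ → ℝ)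
    (hc₁ : Continuous f₁) (hc₂ : Continuous f₂)
    (x x' y y' : ℝ) (hxx' : x ≤ x') (hx'y : x' ≤ y) (hyy' : y ≤ y') :
    twoLineLPP f₁ f₂ x y' + twoLineLPP f₁ f₂ x' y ≤
      twoLineLPP f₁ f₂ x y + twoLineLPP f₁ f₂ x' y' := by
  set h : ℝ → ℝ := fun z => f₂ z - f₁ z with hh
  have hbd : ∀ a b : ℝ, BddAbove (h '' Set.Icc a b) := fun a b =>
    (isCompact_Icc.image (hc₂.sub hc₁)).bddAbove
  have hrw : ∀ a b : ℝ, a ≤ b →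
      twoLineLPP f₁ f₂ a b = sSup (h '' Set.Icc a b) + (f₁ b - f₂ a) := by
    intro a b hab
    have : (fun z => f₂ z - f₂ a + f₁ b - f₁ z) = fun z => h z + (f₁ b - f₂ a) := by
      funext z; simp [hh]; ring
    rw [twoLineLPP, this, sSup_image_add_const (Set.nonempty_Icc.2 hab) (hbd a b)]
  have hxy : x ≤ y := hxx'.trans hx'y
  have hx'y' : x' ≤ y' := hx'y.trans hyy'
  have hxy' : x ≤ y' := hxy.trans hyy'
  rw [hrw x y' hxy', hrw x' y hx'y, hrw x y hxy, hrw x' y' hx'y']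
  -- union decomposition
  have hunion : Set.Icc x y ∪ Set.Icc x' y' = Set.Icc x y' := by
    ext z
    constructor
    · rintro (⟨h1, h2⟩ | ⟨h1, h2⟩) <;> exact ⟨by linarith, by linarith⟩
    · rintro ⟨h1, h2⟩
      rcases le_total z y with hz | hz
      · exact Or.inl ⟨h1, hz⟩
      · exact Or.inr ⟨hx'y.trans hz, h2⟩
  have hmax : sSup (h '' Set.Icc x y') =
      max (sSup (h '' Set.Icc x y)) (sSup (h '' Set.Icc x' y')) := by
    rw [← hunion, Set.image_union]
    exact csSup_union (hbd x y) ((Set.nonempty_Icc.2 hxy).image _)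
      (hbd x' y') ((Set.nonempty_Icc.2 hx'y').image _)
  have hle1 : sSup (h '' Set.Icc x' y) ≤ sSup (h '' Set.Icc x y) :=
    csSup_le_csSup (hbd x y) ((Set.nonempty_Icc.2 hx'y).image _)
      (Set.image_mono (Set.Icc_subset_Icc hxx' le_rfl))
  have hle2 : sSup (h '' Set.Icc x' y) ≤ sSup (h '' Set.Icc x' y') :=
    csSup_le_csSup (hbd x' y') ((Set.nonempty_Icc.2 hx'y).image _)
      (Set.image_mono (Set.Icc_subset_Icc le_rfl hyy'))
  rw [hmax]
  rcases max_cases (sSup (h '' Set.Icc x y)) (sSup (h '' Set.Icc x' y')) with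
    ⟨heq, _⟩ | ⟨heq, _⟩ <;> rw [heq] <;> linarith
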